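/- Let p0 ∈ ℝ, D : ℝ → ℝ, and D0, D1 : ℝ × ℝ → ℝ. Suppose D1 is (Fréchet) differentiable at (p0, p0), D1(p, p) = D(p) for all p, x ↦ D1(x, y) is nondecreasing for each y, y ↦ D0(x, y) is nondecreasing for each x, and ∂D0/∂y exists at (p0, p0). Then D is differentiable at p0 and the naive demand estimator underestimates the demand treatment effect: ∂D1/∂y(p0, p0) − ∂D0/∂y(p0, p0) ≤ D'(p0). -/

import Mathlib

open Filter Topology

lemma mono_hasDerivAt_nonneg {f : ℝ → ℝ} {d a : ℝ}
    (hf : Monotone f) (h : HasDerivAt f d a) : 0 ≤ d := by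
  have h1 : Tendsto (slope f a) (𝓝[>] a) (𝓝 d) :=
    (hasDerivAt_iff_tendsto_slope.mp h).mono_left
      (nhdsWithin_mono a (fun x hx => ne_of_gt hx))
  refine ge_of_tendsto h1 ?_
  filter_upwards [self_mem_nhdsWithin] with x hx
  rw [slope_def_field, div_eq_mul_inv]
  exact mul_nonneg (sub_nonneg.mpr (hf (le_of_lt hx)))
    (inv_nonneg.mpr (sub_nonneg.mpr (le_of_lt hx)))

/-- the naive demand estimator underestimates the demand
treatment effect. -/
theorem naive_demand_estimator_underestimates
    (p0 : ℝ) (D : ℝ → ℝ) (D0 D1 : ℝ × ℝ → ℝ)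
    (L : ℝ × ℝ →L[ℝ] ℝ) (d0y : ℝ)
    (hD1 : HasFDerivAt D1 L (p0, p0))
    (hdiag : ∀ p : ℝ, D1 (p, p) = D p)
    (hmono1 : ∀ y : ℝ, Monotone (fun x => D1 (x, y)))
    (hmono0 : ∀ x : ℝ, Monotone (fun y => D0 (x, y)))
    (hD0 : HasDerivAt (fun y => D0 (p0, y)) d0y p0) :
    DifferentiableAt ℝ D p0 ∧ L (0, 1) - d0y ≤ deriv D p0 := by
  have hg : HasDerivAt (fun p : ℝ => (p, p)) ((1 : ℝ), (1 : ℝ)) p0 :=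
    (hasDerivAt_id p0).prodMk (hasDerivAt_id p0)
  have hcomp : HasDerivAt (D1 ∘ fun p : ℝ => (p, p)) (L (1, 1)) p0 :=
    HasFDerivAt.comp_hasDerivAt (f := fun p : ℝ => (p, p)) p0 hD1 hg
  have hD : HasDerivAt D (L (1, 1)) p0 := by
    have : (D1 ∘ fun p : ℝ => (p, p)) = D := funext hdiag
    rwa [this] at hcomp
  refine ⟨hD.differentiableAt, ?_⟩
  rw [hD.deriv]
  have hg2 : HasDerivAt (fun x : ℝ => (x, p0)) ((1 : ℝ), (0 : ℝ)) p0 :=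
    (hasDerivAt_id p0).prodMk (hasDerivAt_const p0 p0)
  have hx : HasDerivAt (D1 ∘ fun x : ℝ => (x, p0)) (L (1, 0)) p0 :=
    HasFDerivAt.comp_hasDerivAt (f := fun x : ℝ => (x, p0)) p0 hD1 hg2
  have h10 : 0 ≤ L (1, 0) := mono_hasDerivAt_nonneg (hmono1 p0) hx
  have h0y : 0 ≤ d0y := mono_hasDerivAt_nonneg (hmono0 p0) hD0
  have hsum : L (1, 1) = L (1, 0) + L (0, 1) := by
    rw [← map_add]; norm_num
  linarith
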